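/- arXiv:2603.10733 — 3 statements merged into one kernel-verified Lean document; each statement's English description precedes it below -/
import Mathlib

section
/- Over any binary alphabet {a,b}, the set of factors of infinite smooth words equals the set of f-smooth words: L(C^∞) = C_f^∞. In particular the factor complexities agree: p_{C^∞}(n) = p_{C_f^∞}(n) for all n. -/
namespace SmoothWords

/-- Complement of a letter over the alphabet `{a, b}`. -/
def flip (a b c : ℕ) : ℕ := if c = a then b else a

/-- Run-length encoding of a finite word: list of (letter, exponent) pairs. -/
def runs : List ℕ → List (ℕ × ℕ)
  | [] => []
  | c :: t =>
    match runs t with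
    | [] => [(c, 1)]
    | (d, k) :: r => if c = d then (c, k + 1) :: r else (c, 1) :: (d, k) :: r

/-- The exponents of the canonical run-length factorization. -/
def exps (u : List ℕ) : List ℕ := (runs u).map Prod.snd

/-- Boundary cut used by the finite derivatives. -/
def cut (a b p : ℕ) : List ℕ := if p ≤ a then [] else [b]

/-- The finite derivative `D_f`. -/
def Df (a b : ℕ) (u : List ℕ) : List ℕ :=
  match exps u with
  | [] => []
  | [p] => cut a b p
  | p :: q :: rest =>
      cut a b p ++ (q :: rest).dropLast ++ cut a b ((q :: rest).getLast (List.cons_ne_nil _ _))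

/-- `u` is f-derivable: letters in `{a,b}`, inner run exponents in `{a,b}`,
boundary run exponents in `[1, b]`. -/
def Cf1 (a b : ℕ) (u : List ℕ) : Prop :=
  (∀ c ∈ u, c = a ∨ c = b) ∧
  (∀ p ∈ exps u, p ≤ b) ∧
  (∀ p ∈ ((exps u).drop 1).dropLast, p = a ∨ p = b)

/-- `u` is f-smooth: all iterated finite derivatives are f-derivable
(equivalently, some iterate is `ε`). -/
def FSmooth (a b : ℕ) (u : List ℕ) : Prop := ∀ n, Cf1 a b ((Df a b)^[n] u)

/-- The r-derivative `D_r`: keeps all exponents but cuts the last one. -/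
def Dr (a b : ℕ) (u : List ℕ) : List ℕ :=
  match exps u with
  | [] => []
  | p :: rest =>
      (p :: rest).dropLast ++ cut a b ((p :: rest).getLast (List.cons_ne_nil _ _))

/-- `u` is r-derivable. -/
def Cr1 (a b : ℕ) (u : List ℕ) : Prop :=
  (∀ c ∈ u, c = a ∨ c = b) ∧
  (∀ p ∈ exps u, p ≤ b) ∧
  (∀ p ∈ (exps u).dropLast, p = a ∨ p = b)

/-- `u` is r-smooth. -/
def RSmooth (a b : ℕ) (u : List ℕ) : Prop := ∀ n, Cr1 a b ((Dr a b)^[n] u)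

/-- `y` is the derivative of the infinite word `x`: `x = x₀^{y₀} x̄₀^{y₁} x₀^{y₂} ⋯`
with all `y i ∈ {a, b}` (in particular `x` is derivable). -/
def DerivesTo (a b : ℕ) (x y : ℕ → ℕ) : Prop :=
  (∀ i, y i = a ∨ y i = b) ∧
  ∃ S : ℕ → ℕ, S 0 = 0 ∧ (∀ k, S (k + 1) = S k + y k) ∧
    ∀ k i, S k ≤ i → i < S (k + 1) → x i = (flip a b)^[k] (x 0)

/-- An infinite word over `{a,b}` is smooth if it is infinitely derivable. -/
def Smooth (a b : ℕ) (x : ℕ → ℕ) : Prop :=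
  (∀ i, x i = a ∨ x i = b) ∧
  ∃ X : ℕ → ℕ → ℕ, X 0 = x ∧ ∀ n, DerivesTo a b (X n) (X (n + 1))

/-- Auxiliary for the f-primitives: alternate blocks with given exponents,
ending with a block of exponent `a`. -/
def pfAux (a b : ℕ) : ℕ → List ℕ → List ℕ
  | c, [] => List.replicate a c
  | c, p :: t => List.replicate p c ++ pfAux a b (flip a b c) t

/-- The f-primitive `P_{f,c}`. -/
def Pf (a b c : ℕ) (u : List ℕ) : List ℕ :=
  if c = a then List.replicate a a ++ pfAux a b b u
  else (List.replicate a a ++ pfAux a b b u).map (flip a b)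

/-- `u` is a bispecial f-smooth word. -/
def Bispecial (a b : ℕ) (u : List ℕ) : Prop :=
  FSmooth a b u ∧ FSmooth a b (a :: u) ∧ FSmooth a b (b :: u) ∧
    FSmooth a b (u ++ [a]) ∧ FSmooth a b (u ++ [b])

open Classical in
/-- The multiplicity `m(u) = |{aua,aub,bua,bub} ∩ C_f^∞| - 3`. -/
noncomputable def mult (a b : ℕ) (u : List ℕ) : ℤ :=
  (if FSmooth a b (a :: u ++ [a]) then 1 else 0) +
  (if FSmooth a b (a :: u ++ [b]) then 1 else 0) +
  (if FSmooth a b (b :: u ++ [a]) then 1 else 0) +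
  (if FSmooth a b (b :: u ++ [b]) then 1 else 0) - 3

/-- The vertex of the tree `T` indexed by the path `s` from the root `ε`
(`false` = child by `P_{f,a}`, `true` = child by `P_{f,b}`). -/
def node (a b : ℕ) : List Bool → List ℕ
  | [] => []
  | c :: s => Pf a b (if c then b else a) (node a b s)

/-- Total length `f(i) = ∑_{u ∈ T_i} |u|` of generation `i` of `T`. -/
def totalLen (a b i : ℕ) : ℕ :=
  ∑ s : Fin i → Bool, (node a b (List.ofFn s)).length

/-- Generation `i` of the tree `T`, as a finite set of words. -/
def genSet (a b i : ℕ) : Finset (List ℕ) :=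
  (Finset.univ : Finset (Fin i → Bool)).image fun s => node a b (List.ofFn s)

/-- `b_i(n) = |T_i ∩ A^n|`. -/
def bfun (a b i n : ℕ) : ℕ := ((genSet a b i).filter fun u => u.length = n).card

/-- `s_i(n) = ∑_{m<n} b_i(m)`. -/
def sfun (a b i n : ℕ) : ℕ := ∑ m ∈ Finset.range n, bfun a b i m

/-- `p_i(n) = ∑_{m<n} s_i(m)`. -/
def pfun (a b i n : ℕ) : ℕ := ∑ m ∈ Finset.range n, sfun a b i m

/-- `p(n) = ∑_i p_i(n)`. -/
noncomputable def pTot (a b n : ℕ) : ℝ := ∑' i : ℕ, (pfun a b i n : ℝ)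

/-- `l_i`, the minimal length of a word of generation `i` of `T`. -/
noncomputable def li (a b i : ℕ) : ℕ :=
  sInf {m | ∃ s : Fin i → Bool, (node a b (List.ofFn s)).length = m}

/-- `u` is a factor of the infinite word `x`. -/
def FactorOf (u : List ℕ) (x : ℕ → ℕ) : Prop :=
  ∃ i, u = (List.range u.length).map fun j => x (i + j)

def alt (a b : ℕ) : ℕ → List ℕ → List ℕ
  | _, [] => []
  | c, e :: t => List.replicate e c ++ alt a b (flip a b c) t

section Basics
variable {a b c d : ℕ}

lemma flip_mem (c : ℕ) : flip a b c = a ∨ flip a b c = b := by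
  unfold flip; split <;> simp

lemma flip_ne (hab : a ≠ b) (hc : c = a ∨ c = b) : flip a b c ≠ c := by
  rcases hc with rfl | rfl <;> simp [flip, hab, Ne.symm hab]

lemma flip_eq_of_ne (hab : a ≠ b) (hc : c = a ∨ c = b) (hd : d = a ∨ d = b) (h : c ≠ d) :
    d = flip a b c := by
  rcases hc with rfl | rfl <;> rcases hd with rfl | rfl <;> simp_all [flip, Ne.symm hab]

end Basics

section Runs
variable {a b : ℕ}

lemma runs_cons_eq (c : ℕ) (l : List ℕ) :
    runs (c :: l) = match runs l with
      | [] => [(c, 1)]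
      | (d, k) :: r => if c = d then (c, k + 1) :: r else (c, 1) :: (d, k) :: r := rfl

lemma runs_cons_fst (c : ℕ) (t : List ℕ) : ∃ k r, runs (c :: t) = (c, k) :: r ∧ 1 ≤ k := by
  rw [runs_cons_eq]
  rcases h : runs t with _ | ⟨⟨d, k⟩, r⟩
  · exact ⟨1, [], rfl, le_refl 1⟩
  · by_cases hc : c = d
    · subst hc; exact ⟨k + 1, r, by simp, by omega⟩
    · exact ⟨1, (d, k) :: r, by simp [hc], le_refl 1⟩

lemma runs_eq_nil {u : List ℕ} : runs u = [] ↔ u = [] := by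
  cases u with
  | nil => simp [runs]
  | cons c t =>
      obtain ⟨k, r, h, _⟩ := runs_cons_fst c t
      simp [h]

lemma exps_ne_nil {u : List ℕ} (hu : u ≠ []) : exps u ≠ [] := by
  cases u with
  | nil => simp at hu
  | cons c t =>
      obtain ⟨k, r, h, _⟩ := runs_cons_fst c t
      simp [exps, h]

lemma runs_pos {u : List ℕ} : ∀ p ∈ runs u, 1 ≤ p.2 := by
  induction u with
  | nil => simp [runs]
  | cons c t ih =>
      intro p hp
      rw [runs_cons_eq] at hp
      rcases h : runs t with _ | ⟨⟨d, k⟩, r⟩ <;> rw [h] at hp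
      · simp at hp; subst hp; simp
      · have hk : 1 ≤ k := by simpa using ih (d, k) (by rw [h]; simp)
        by_cases hc : c = d
        · subst hc
          simp at hp
          rcases hp with rfl | hp
          · simp
          · exact ih p (by rw [h]; simp [hp])
        · simp [hc] at hp
          rcases hp with rfl | hp
          · simp
          · exact ih p (by rw [h]; simp [hp])

lemma exps_pos {u : List ℕ} : ∀ p ∈ exps u, 1 ≤ p := by
  intro p hp
  simp only [exps, List.mem_map] at hp
  obtain ⟨q, hq, rfl⟩ := hp
  exact runs_pos q hq

lemma sum_exps : ∀ u : List ℕ, (exps u).sum = u.length := by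
  intro u
  induction u with
  | nil => simp [exps, runs]
  | cons c t ih =>
      rw [exps, runs_cons_eq]
      rcases h : runs t with _ | ⟨⟨d, k⟩, r⟩
      · rw [runs_eq_nil] at h; subst h; simp
      · rw [exps, h] at ih
        by_cases hc : c = d
        · subst hc; simp at ih ⊢; omega
        · simp [hc] at ih ⊢; omega

lemma runs_replicate_append {p : ℕ} (hp : 1 ≤ p) {c : ℕ} {w : List ℕ}
    (hw : ∀ d, w.head? = some d → d ≠ c) :
    runs (List.replicate p c ++ w) = (c, p) :: runs w := by
  induction p with
  | zero => omega
  | succ p ih =>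
      by_cases hp0 : p = 0
      · subst hp0
        rw [List.replicate_succ, List.replicate_zero, List.cons_append, List.nil_append,
          runs_cons_eq]
        cases w with
        | nil => simp [runs]
        | cons d t =>
            obtain ⟨k, r, h, _⟩ := runs_cons_fst d t
            have hdc : d ≠ c := hw d (by simp)
            rw [h]
            simp [Ne.symm hdc]
      · have h := ih (by omega)
        rw [List.replicate_succ, List.cons_append, runs_cons_eq, h]
        simp

lemma alt_head {c e : ℕ} {t : List ℕ} (he : 1 ≤ e) :
    ∃ w, alt a b c (e :: t) = c :: w := by
  cases e with
  | zero => omega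
  | succ e => exact ⟨List.replicate e c ++ alt a b (flip a b c) t, by simp [alt, List.replicate_succ]⟩

lemma exps_alt (hab : a ≠ b) : ∀ (es : List ℕ) (c : ℕ), (c = a ∨ c = b) →
    (∀ e ∈ es, 1 ≤ e) → exps (alt a b c es) = es := by
  intro es
  induction es with
  | nil => intro c _ _; simp [alt, exps, runs]
  | cons e t ih =>
      intro c hc hes
      have he : 1 ≤ e := hes e (by simp)
      have hw : ∀ d, (alt a b (flip a b c) t).head? = some d → d ≠ c := by
        intro d hd
        cases t with
        | nil => simp [alt] at hd
        | cons e' t' =>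
            obtain ⟨w, hww⟩ := alt_head (a := a) (b := b) (c := flip a b c)
              (hes e' (by simp))
            rw [hww] at hd
            simp at hd
            subst hd
            exact flip_ne hab hc
      show exps (List.replicate e c ++ alt a b (flip a b c) t) = e :: t
      rw [exps, runs_replicate_append he hw]
      simp only [List.map_cons]
      rw [← exps, ih (flip a b c) (flip_mem c) (fun x hx => hes x (by simp [hx]))]

lemma length_alt : ∀ (es : List ℕ) (c : ℕ), (alt a b c es).length = es.sum := by
  intro es
  induction es with
  | nil => intro c; simp [alt]
  | cons e t ih => intro c; simp [alt, ih]

lemma alt_append : ∀ (es r : List ℕ) (c : ℕ),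
    alt a b c (es ++ r) = alt a b c es ++ alt a b ((flip a b)^[es.length] c) r := by
  intro es
  induction es with
  | nil => intro r c; simp [alt]
  | cons e t ih =>
      intro r c
      simp only [List.cons_append, alt, List.append_eq, ih, Function.iterate_succ_apply,
        List.length_cons, List.append_assoc]

lemma alt_mem : ∀ (es : List ℕ) (c : ℕ), (c = a ∨ c = b) →
    ∀ d ∈ alt a b c es, d = a ∨ d = b := by
  intro es
  induction es with
  | nil => intro c _ d hd; simp [alt] at hd
  | cons e t ih =>
      intro c hc d hd
      simp only [alt, List.mem_append, List.mem_replicate] at hd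
      rcases hd with ⟨_, rfl⟩ | hd
      · exact hc
      · exact ih _ (flip_mem c) d hd

lemma eq_alt (hab : a ≠ b) : ∀ (t : List ℕ) (c : ℕ), (∀ x ∈ c :: t, x = a ∨ x = b) →
    c :: t = alt a b c (exps (c :: t)) := by
  intro t
  induction t with
  | nil => intro c _; simp [exps, runs, alt]
  | cons d t' ih =>
      intro c hmem
      have hc : c = a ∨ c = b := hmem c (by simp)
      have hd : d = a ∨ d = b := hmem d (by simp)
      obtain ⟨k, r, hr, hk⟩ := runs_cons_fst d t'
      by_cases hcd : c = d
      · subst hcd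
        have h2 : runs (c :: c :: t') = (c, k + 1) :: r := by
          rw [runs_cons_eq, hr]; simp
        have hmem' : ∀ x ∈ c :: t', x = a ∨ x = b := by
          intro x hx
          rcases List.mem_cons.1 hx with rfl | hx
          · exact hc
          · exact hmem x (by simp [hx])
        have ih' := ih c hmem' 
        rw [exps, h2]
        simp only [List.map_cons]
        have h3 : alt a b c (exps (c :: t')) =
            List.replicate k c ++ alt a b (flip a b c) (r.map Prod.snd) := by
          rw [exps, hr]; simp [alt]
        calc c :: c :: t' = c :: alt a b c (exps (c :: t')) := by rw [← ih']
          _ = _ := by rw [h3]; simp [alt, List.replicate_succ]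
      · have h2 : runs (c :: d :: t') = (c, 1) :: (d, k) :: r := by
          rw [runs_cons_eq, hr]; simp [hcd]
        have ih' := ih d (by intro x hx; exact hmem x (List.mem_cons_of_mem _ hx))
        have hfd : d = flip a b c := flip_eq_of_ne hab hc hd hcd
        rw [exps, h2]
        simp only [List.map_cons]
        have h4 : alt a b c (1 :: k :: r.map Prod.snd) =
            c :: alt a b (flip a b c) (k :: r.map Prod.snd) := by
          simp [alt]
        rw [h4, ← hfd]
        congr 1
        rw [ih', exps, hr]
        simp

end Runs









section DfLemmas
variable {a b : ℕ}

lemma cut_le {p : ℕ} (h : p ≤ a) : cut a b p = [] := by simp [cut, h]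

lemma cut_gt {p : ℕ} (h : a < p) : cut a b p = [b] := by simp [cut, Nat.not_le.2 h]

lemma length_cut_le (p : ℕ) : (cut a b p).length ≤ 1 := by
  unfold cut; split <;> simp

lemma Df_nil : Df a b [] = [] := rfl

lemma Df_single {u : List ℕ} {p : ℕ} (h : exps u = [p]) : Df a b u = cut a b p := by
  unfold Df; rw [h]

lemma getLast_cons_getD {q : ℕ} {rest : List ℕ} :
    (q :: rest).getLast (List.cons_ne_nil _ _) = (q :: rest).getD rest.length 0 := by
  rw [List.getLast_eq_getElem, List.getD_eq_getElem]
  · simp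
  · simp

lemma Df_multi {u : List ℕ} {p q : ℕ} {rest : List ℕ} (h : exps u = p :: q :: rest) :
    Df a b u = cut a b p ++ (q :: rest).dropLast ++
      cut a b ((q :: rest).getD rest.length 0) := by
  unfold Df; rw [h, ← getLast_cons_getD]

lemma length_le_sum {l : List ℕ} (h : ∀ e ∈ l, 1 ≤ e) : l.length ≤ l.sum := by
  induction l with
  | nil => simp
  | cons e t ih =>
      simp only [List.length_cons, List.sum_cons]
      have := h e (by simp)
      have := ih fun x hx => h x (by simp [hx])
      omega

lemma length_Df_lt (ha : 1 ≤ a) {u : List ℕ} (hu : u ≠ []) :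
    (Df a b u).length < u.length := by
  have hlen : (exps u).sum = u.length := sum_exps u
  rcases hes : exps u with _ | ⟨e, rest⟩
  · exact absurd hes (exps_ne_nil hu)
  · have hpos : ∀ x ∈ exps u, 1 ≤ x := exps_pos
    have he1 : 1 ≤ e := hpos e (by rw [hes]; simp)
    have hrest : rest.length ≤ rest.sum :=
      length_le_sum fun x hx => hpos x (by rw [hes]; simp [hx])
    have hsum : e + rest.sum = u.length := by rw [← hlen, hes]; simp
    rcases rest with _ | ⟨q, rest2⟩
    · rw [Df_single hes]
      by_cases hc : e ≤ a
      · rw [cut_le hc]; simp at hsum ⊢; omega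
      · rw [cut_gt (by omega)]; simp at hsum ⊢; omega
    · rw [Df_multi hes, List.length_append, List.length_append]
      have h3 : ((q :: rest2).dropLast).length = rest2.length := by simp
      rw [h3]
      simp only [List.length_cons, List.sum_cons] at hrest hsum
      have hcr : (cut a b ((q :: rest2).getD rest2.length 0)).length ≤ 1 :=
        length_cut_le _
      by_cases hc : e ≤ a
      · rw [cut_le hc]
        simp only [List.length_nil]
        omega
      · rw [cut_gt (show a < e by omega)]
        simp only [List.length_singleton]
        omega

lemma Cf1_nil : Cf1 a b [] := by
  refine ⟨by simp, by simp [exps, runs], by simp [exps, runs]⟩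

lemma fsmooth_nil : FSmooth a b [] := by
  intro n
  rw [Function.iterate_fixed Df_nil]
  exact Cf1_nil

lemma fsmooth_iff {u : List ℕ} :
    FSmooth a b u ↔ Cf1 a b u ∧ FSmooth a b (Df a b u) := by
  constructor
  · intro h
    exact ⟨h 0, fun n => by have := h (n + 1); rwa [Function.iterate_succ_apply] at this⟩
  · rintro ⟨h0, h⟩ n
    cases n with
    | zero => exact h0
    | succ n => rw [Function.iterate_succ_apply]; exact h n

end DfLemmas






def Ts (y : ℕ → ℕ) : ℕ → ℕ
  | 0 => 0
  | k + 1 => Ts y k + y k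

def Kb (y : ℕ → ℕ) (i : ℕ) : ℕ := Nat.findGreatest (fun k => Ts y k ≤ i) i

def expand (a b : ℕ) (y : ℕ → ℕ) (c : ℕ) : ℕ → ℕ := fun i => (flip a b)^[Kb y i] c

section Basics2
variable {a b c : ℕ}

lemma flip_iter_mem (hc : c = a ∨ c = b) (k : ℕ) :
    (flip a b)^[k] c = a ∨ (flip a b)^[k] c = b := by
  cases k with
  | zero => simpa using hc
  | succ k => rw [Function.iterate_succ_apply']; exact flip_mem _

lemma flip_flip (hab : a ≠ b) (hc : c = a ∨ c = b) : flip a b (flip a b c) = c := by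
  rcases hc with rfl | rfl
  · simp [flip, Ne.symm hab]
  · simp [flip, hab, Ne.symm hab]

lemma flip_iter_invol (hab : a ≠ b) (hc : c = a ∨ c = b) (k : ℕ) :
    (flip a b)^[k] ((flip a b)^[k] c) = c := by
  induction k with
  | zero => rfl
  | succ k ih =>
      rw [Function.iterate_succ_apply (flip a b) k ((flip a b)^[k+1] c),
        Function.iterate_succ_apply' (flip a b) k c,
        flip_flip hab (flip_iter_mem hc k)]
      exact ih

end Basics2

section TsLemmas
variable {a b : ℕ} {y : ℕ → ℕ}

lemma Ts_ge (hy : ∀ k, 1 ≤ y k) : ∀ k, k ≤ Ts y k := by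
  intro k
  induction k with
  | zero => simp [Ts]
  | succ k ih => have := hy k; simp only [Ts]; omega

lemma Ts_le_Ts (hy : ∀ k, 1 ≤ y k) {k m : ℕ} (h : k ≤ m) : Ts y k ≤ Ts y m := by
  induction m with
  | zero => simp at h; subst h; rfl
  | succ m ih =>
      rcases Nat.lt_or_ge k (m + 1) with h' | h'
      · have := ih (by omega)
        have := hy m
        simp only [Ts]; omega
      · have : k = m + 1 := by omega
        subst this; rfl

lemma Kb_spec (hy : ∀ k, 1 ≤ y k) (i : ℕ) :
    Ts y (Kb y i) ≤ i ∧ i < Ts y (Kb y i + 1) := by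
  constructor
  · exact Nat.findGreatest_spec (P := fun k => Ts y k ≤ i) (Nat.zero_le i) (by simp [Ts])
  · by_contra h
    push_neg at h
    rcases Nat.lt_or_ge i (Kb y i + 1) with h' | h'
    · have := Ts_ge hy (Kb y i + 1)
      omega
    · exact Nat.findGreatest_is_greatest (P := fun k => Ts y k ≤ i) (Nat.lt_succ_self _) h' h

lemma Kb_eq (hy : ∀ k, 1 ≤ y k) {k i : ℕ} (h1 : Ts y k ≤ i) (h2 : i < Ts y (k + 1)) :
    Kb y i = k := by
  obtain ⟨s1, s2⟩ := Kb_spec hy i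
  rcases Nat.lt_trichotomy (Kb y i) k with h | h | h
  · have : Ts y (Kb y i + 1) ≤ Ts y k := Ts_le_Ts hy (by omega)
    omega
  · exact h
  · have : Ts y (k + 1) ≤ Ts y (Kb y i) := Ts_le_Ts hy (by omega)
    omega

lemma expand_block {c : ℕ} (hy : ∀ k, 1 ≤ y k) {k i : ℕ}
    (h1 : Ts y k ≤ i) (h2 : i < Ts y (k + 1)) :
    expand a b y c i = (flip a b)^[k] c := by
  show (flip a b)^[Kb y i] c = _
  rw [Kb_eq hy h1 h2]

lemma expand_zero {c : ℕ} (hy : ∀ k, 1 ≤ y k) : expand a b y c 0 = c := by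
  have h : Kb y 0 = 0 := Kb_eq hy (by simp [Ts]) (by have := hy 0; simp [Ts]; omega)
  show (flip a b)^[Kb y 0] c = c
  rw [h]
  rfl

lemma derivesTo_expand {c : ℕ} (ha : 1 ≤ a) (hab : a < b) (hy : ∀ k, y k = a ∨ y k = b) :
    DerivesTo a b (expand a b y c) y := by
  have hy1 : ∀ k, 1 ≤ y k := fun k => by rcases hy k with h | h <;> omega
  refine ⟨hy, Ts y, rfl, fun k => rfl, fun k i h1 h2 => ?_⟩
  rw [expand_block hy1 h1 h2, expand_zero hy1]

lemma smooth_expand {c : ℕ} (ha : 1 ≤ a) (hab : a < b) (hc : c = a ∨ c = b)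
    (hs : Smooth a b y) : Smooth a b (expand a b y c) := by
  obtain ⟨hmem, X, hX0, hder⟩ := hs
  refine ⟨fun i => flip_iter_mem hc _, fun n => Nat.casesOn n (expand a b y c) X, rfl, ?_⟩
  intro n
  cases n with
  | zero =>
      show DerivesTo a b (expand a b y c) (X 0)
      rw [hX0]
      exact derivesTo_expand ha hab hmem
  | succ n => exact hder n

lemma S_eq_Ts {S : ℕ → ℕ} (h0 : S 0 = 0) (hS : ∀ k, S (k + 1) = S k + y k) :
    ∀ k, S k = Ts y k := by
  intro k
  induction k with
  | zero => simpa [Ts] using h0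
  | succ k ih => rw [hS, ih]; rfl

end TsLemmas


section MapRange
variable {a b : ℕ}

lemma alt_nil {c : ℕ} : alt a b c [] = [] := rfl

lemma alt_cons {c e : ℕ} {t : List ℕ} :
    alt a b c (e :: t) = List.replicate e c ++ alt a b (flip a b c) t := rfl

lemma map_range_const {f : ℕ → ℕ} {m c : ℕ} (h : ∀ s, s < m → f s = c) :
    (List.range m).map f = List.replicate m c := by
  apply List.eq_replicate_iff.2
  refine ⟨by simp, ?_⟩
  intro d hd
  simp only [List.mem_map, List.mem_range] at hd
  obtain ⟨s, hs, rfl⟩ := hd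
  exact h s hs

lemma getD_map_range {f : ℕ → ℕ} {L t : ℕ} (h : t < L) :
    ((List.range L).map f).getD t 0 = f t := by
  rw [List.getD_eq_getElem _ _ (by simp [h])]
  simp

end MapRange

section Decomp
variable {a b : ℕ} {y : ℕ → ℕ} {x : ℕ → ℕ} {c0 : ℕ}

lemma decompB (hy1 : ∀ k, 1 ≤ y k)
    (hx : ∀ k i, Ts y k ≤ i → i < Ts y (k + 1) → x i = (flip a b)^[k] c0) :
    ∀ n, 1 ≤ n → ∀ k, ∃ es : List ℕ,
      es ≠ [] ∧ es.sum = n ∧ (∀ e ∈ es, 1 ≤ e) ∧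
      ((List.range n).map fun s => x (Ts y k + s)) = alt a b ((flip a b)^[k] c0) es ∧
      (∀ t, t + 1 < es.length → es.getD t 0 = y (k + t)) ∧
      es.getD (es.length - 1) 0 ≤ y (k + (es.length - 1)) := by
  intro n
  induction n using Nat.strong_induction_on with
  | _ n ih =>
    intro hn k
    by_cases hcase : n ≤ y k
    · refine ⟨[n], by simp, by simp, by simpa using hn, ?_, by simp, by simpa using hcase⟩
      have hconst : ∀ s, s < n → x (Ts y k + s) = (flip a b)^[k] c0 := by
        intro s hs
        refine hx k _ (by omega) ?_
        show _ < Ts y k + y k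
        omega
      rw [map_range_const hconst]
      simp [alt_cons, alt_nil]
    · push_neg at hcase
      obtain ⟨es', hne', hsum', hpos', hmap', hinner', hlast'⟩ :=
        ih (n - y k) (by have := hy1 k; omega) (by omega) (k + 1)
      have hlp : 1 ≤ es'.length := List.length_pos_iff.2 hne'
      refine ⟨y k :: es', by simp, by simp; omega, ?_, ?_, ?_, ?_⟩
      · intro e he
        rcases List.mem_cons.1 he with rfl | he
        · exact hy1 k
        · exact hpos' e he
      · rw [show n = y k + (n - y k) from by omega, List.range_add, List.map_append]
        have hfirst : ((List.range (y k)).map fun s => x (Ts y k + s)) =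
            List.replicate (y k) ((flip a b)^[k] c0) := by
          refine map_range_const fun s hs => hx k _ (by omega) ?_
          show _ < Ts y k + y k
          omega
        have hsecond : (((List.range (n - y k)).map fun s => y k + s).map
              fun s => x (Ts y k + s)) =
            (List.range (n - y k)).map fun s => x (Ts y (k + 1) + s) := by
          rw [List.map_map]
          refine List.map_congr_left fun s hs => ?_
          show x (Ts y k + (y k + s)) = x (Ts y (k + 1) + s)
          congr 1
          show _ = Ts y k + y k + s
          omega
        rw [hfirst, hsecond, hmap', alt_cons, Function.iterate_succ_apply' (flip a b) k c0]
      · intro t ht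
        cases t with
        | zero => simp
        | succ t =>
            rw [List.getD_cons_succ]
            rw [hinner' t (by simpa using ht)]
            congr 1
            omega
      · have h1 : (y k :: es').length - 1 = (es'.length - 1) + 1 := by
          simp; omega
        rw [h1, List.getD_cons_succ]
        have := hlast'
        have h2 : k + 1 + (es'.length - 1) = k + ((es'.length - 1) + 1) := by omega
        rw [h2] at this
        exact this

lemma decompA (hy1 : ∀ k, 1 ≤ y k)
    (hx : ∀ k i, Ts y k ≤ i → i < Ts y (k + 1) → x i = (flip a b)^[k] c0)
    (n : ℕ) (hn : 1 ≤ n) (i : ℕ) :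
    ∃ (k : ℕ) (es : List ℕ),
      es ≠ [] ∧ es.sum = n ∧ (∀ e ∈ es, 1 ≤ e) ∧
      ((List.range n).map fun s => x (i + s)) = alt a b ((flip a b)^[k] c0) es ∧
      es.getD 0 0 ≤ y k ∧
      (∀ t, 1 ≤ t → t + 1 < es.length → es.getD t 0 = y (k + t)) ∧
      es.getD (es.length - 1) 0 ≤ y (k + (es.length - 1)) := by
  obtain ⟨hk1, hk2⟩ := Kb_spec hy1 i
  set k := Kb y i with hk
  have hTs : Ts y (k + 1) = Ts y k + y k := rfl
  have hm1 : 1 ≤ Ts y (k + 1) - i := by omega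
  have hmyk : Ts y (k + 1) - i ≤ y k := by omega
  by_cases hcase : n ≤ Ts y (k + 1) - i
  · refine ⟨k, [n], by simp, by simp, by simpa using hn, ?_, by simp; omega, by simp,
      by simp; omega⟩
    have hconst : ∀ s, s < n → x (i + s) = (flip a b)^[k] c0 := by
      intro s hs
      exact hx k _ (by omega) (by omega)
    rw [map_range_const hconst]
    simp [alt_cons, alt_nil]
  · push_neg at hcase
    set m := Ts y (k + 1) - i with hmdef
    obtain ⟨es', hne', hsum', hpos', hmap', hinner', hlast'⟩ :=
      decompB hy1 hx (n - m) (by omega) (k + 1)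
    have hlp : 1 ≤ es'.length := List.length_pos_iff.2 hne'
    refine ⟨k, m :: es', by simp, by simp; omega, ?_, ?_, by simpa using hmyk, ?_, ?_⟩
    · intro e he
      rcases List.mem_cons.1 he with rfl | he
      · exact hm1
      · exact hpos' e he
    · rw [show n = m + (n - m) from by omega, List.range_add, List.map_append]
      have hfirst : ((List.range m).map fun s => x (i + s)) =
          List.replicate m ((flip a b)^[k] c0) := by
        refine map_range_const fun s hs => hx k _ (by omega) (by omega)
      have hsecond : (((List.range (n - m)).map fun s => m + s).map
            fun s => x (i + s)) =
          (List.range (n - m)).map fun s => x (Ts y (k + 1) + s) := by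
        rw [List.map_map]
        refine List.map_congr_left fun s hs => ?_
        show x (i + (m + s)) = x (Ts y (k + 1) + s)
        congr 1
        omega
      rw [hfirst, hsecond, hmap', alt_cons, Function.iterate_succ_apply' (flip a b) k c0]
    · intro t ht1 ht2
      cases t with
      | zero => omega
      | succ t =>
          rw [List.getD_cons_succ]
          rw [hinner' t (by simpa using ht2)]
          congr 1
          omega
    · have h1 : (m :: es').length - 1 = (es'.length - 1) + 1 := by
        simp; omega
      rw [h1, List.getD_cons_succ]
      have := hlast'
      have h2 : k + 1 + (es'.length - 1) = k + ((es'.length - 1) + 1) := by omega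
      rw [h2] at this
      exact this

lemma placeB (hy1 : ∀ k, 1 ≤ y k)
    (hx : ∀ k i, Ts y k ≤ i → i < Ts y (k + 1) → x i = (flip a b)^[k] c0) :
    ∀ (es : List ℕ) (k : ℕ), (∀ e ∈ es, 1 ≤ e) →
      (∀ t, t + 1 < es.length → es.getD t 0 = y (k + t)) →
      es.getD (es.length - 1) 0 ≤ y (k + (es.length - 1)) →
      ((List.range es.sum).map fun s => x (Ts y k + s)) =
        alt a b ((flip a b)^[k] c0) es := by
  intro es
  induction es with
  | nil => intro k _ _ _; simp [alt_nil]
  | cons e t ih =>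
      intro k hpos hinner hlast
      by_cases ht : t = []
      · subst ht
        have he : e ≤ y k := by simpa using hlast
        have hconst : ∀ s, s < (e :: ([] : List ℕ)).sum → x (Ts y k + s) = (flip a b)^[k] c0 := by
          intro s hs
          simp at hs
          refine hx k _ (by omega) ?_
          show _ < Ts y k + y k
          omega
        rw [map_range_const hconst]
        simp [alt_cons, alt_nil]
      · have hlp : 1 ≤ t.length := List.length_pos_iff.2 ht
        have he : e = y k := by
          have := hinner 0 (by simp; omega)
          simpa using this
        rw [List.sum_cons, List.range_add, List.map_append, alt_cons]
        have hfirst : ((List.range e).map fun s => x (Ts y k + s)) =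
            List.replicate e ((flip a b)^[k] c0) := by
          refine map_range_const fun s hs => hx k _ (by omega) ?_
          show _ < Ts y k + y k
          omega
        have hsecond : (((List.range t.sum).map fun s => e + s).map
              fun s => x (Ts y k + s)) =
            (List.range t.sum).map fun s => x (Ts y (k + 1) + s) := by
          rw [List.map_map]
          refine List.map_congr_left fun s hs => ?_
          show x (Ts y k + (e + s)) = x (Ts y (k + 1) + s)
          congr 1
          show _ = Ts y k + y k + s
          omega
        rw [hfirst, hsecond, he]
        congr 1
        rw [← Function.iterate_succ_apply' (flip a b) k c0]
        refine ih (k + 1) (fun e' he' => hpos e' (by simp [he'])) ?_ ?_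
        · intro t' ht'
          have := hinner (t' + 1) (by simp; omega)
          rw [List.getD_cons_succ] at this
          rw [this]
          congr 1
          omega
        · have h1 : (e :: t).length - 1 = (t.length - 1) + 1 := by simp; omega
          have := hlast
          rw [h1, List.getD_cons_succ] at this
          have h2 : k + ((t.length - 1) + 1) = k + 1 + (t.length - 1) := by omega
          rw [h2] at this
          exact this

lemma placeA (hy1 : ∀ k, 1 ≤ y k)
    (hx : ∀ k i, Ts y k ≤ i → i < Ts y (k + 1) → x i = (flip a b)^[k] c0)
    {e0 : ℕ} {rest : List ℕ} {k : ℕ}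
    (hpos : ∀ e ∈ e0 :: rest, 1 ≤ e)
    (h0 : e0 ≤ y k)
    (hinner : ∀ t, t + 1 < rest.length → rest.getD t 0 = y (k + 1 + t))
    (hlast : rest.getD (rest.length - 1) 0 ≤ y (k + 1 + (rest.length - 1))) :
    ((List.range (e0 :: rest).sum).map fun s => x (Ts y k + (y k - e0) + s)) =
      alt a b ((flip a b)^[k] c0) (e0 :: rest) := by
  rw [List.sum_cons, List.range_add, List.map_append, alt_cons]
  have hfirst : ((List.range e0).map fun s => x (Ts y k + (y k - e0) + s)) =
      List.replicate e0 ((flip a b)^[k] c0) := by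
    refine map_range_const fun s hs => hx k _ (by omega) ?_
    show _ < Ts y k + y k
    omega
  have hsecond : (((List.range rest.sum).map fun s => e0 + s).map
        fun s => x (Ts y k + (y k - e0) + s)) =
      (List.range rest.sum).map fun s => x (Ts y (k + 1) + s) := by
    rw [List.map_map]
    refine List.map_congr_left fun s hs => ?_
    show x (Ts y k + (y k - e0) + (e0 + s)) = x (Ts y (k + 1) + s)
    congr 1
    show _ = Ts y k + y k + s
    omega
  rw [hfirst, hsecond]
  congr 1
  rw [← Function.iterate_succ_apply' (flip a b) k c0]
  exact placeB hy1 hx rest (k + 1) (fun e' he' => hpos e' (by simp [he'])) hinner hlast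

end Decomp


section Struct
variable {a b : ℕ}

lemma eq_map_range {w : List ℕ} {f : ℕ → ℕ} {L : ℕ} (hlen : w.length = L)
    (h : ∀ t, t < L → w.getD t 0 = f t) : w = (List.range L).map f := by
  refine List.ext_getElem (by simp [hlen]) ?_
  intro t h1 h2
  have := h t (by omega)
  rw [List.getD_eq_getElem _ _ h1] at this
  simpa using this

lemma getD_dropLast {l : List ℕ} {t : ℕ} (h : t + 1 < l.length) :
    l.dropLast.getD t 0 = l.getD t 0 := by
  rw [List.getD_eq_getElem _ _ (by simp; omega), List.getD_eq_getElem _ _ (by omega)]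
  exact List.getElem_dropLast _

lemma Cf1_of_struct (hab : a < b) {y : ℕ → ℕ} (hy : ∀ k, y k = a ∨ y k = b)
    {u : List ℕ} {es : List ℕ} {k : ℕ}
    (hmem : ∀ c ∈ u, c = a ∨ c = b)
    (hexps : exps u = es)
    (h0 : es.getD 0 0 ≤ y k)
    (hinner : ∀ t, 1 ≤ t → t + 1 < es.length → es.getD t 0 = y (k + t))
    (hlast : es.getD (es.length - 1) 0 ≤ y (k + (es.length - 1))) :
    Cf1 a b u := by
  have hyb : ∀ m, y m ≤ b := fun m => by rcases hy m with h | h <;> omega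
  refine ⟨hmem, ?_, ?_⟩
  · intro p hp
    rw [hexps] at hp
    obtain ⟨t, ht, rfl⟩ := List.mem_iff_getElem.1 hp
    rw [← List.getD_eq_getElem es 0 ht]
    by_cases ht0 : t = 0
    · subst ht0
      exact le_trans h0 (hyb k)
    · by_cases htl : t = es.length - 1
      · subst htl
        exact le_trans hlast (hyb _)
      · rw [hinner t (by omega) (by omega)]
        exact hyb _
  · intro p hp
    rw [hexps] at hp
    obtain ⟨t, ht, hpt⟩ := List.mem_iff_getElem.1 hp
    have hlen : ((es.drop 1).dropLast).length = es.length - 2 := by simp; omega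
    have h2 : t + 2 < es.length := by omega
    have he : ((es.drop 1).dropLast)[t] = es[t + 1]'(by omega) := by
      rw [List.getElem_dropLast, List.getElem_drop]
      congr 1
      omega
    rw [← hpt, he, ← List.getD_eq_getElem es 0 (by omega),
      hinner (t + 1) (by omega) (by omega)]
    exact hy _

lemma Df_factor (hab : a < b) {y : ℕ → ℕ} (hy : ∀ k, y k = a ∨ y k = b)
    {u : List ℕ} {es : List ℕ} {k : ℕ}
    (hexps : exps u = es) (hne : es ≠ [])
    (h0 : es.getD 0 0 ≤ y k)
    (hinner : ∀ t, 1 ≤ t → t + 1 < es.length → es.getD t 0 = y (k + t))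
    (hlast : es.getD (es.length - 1) 0 ≤ y (k + (es.length - 1))) :
    ∃ j L, Df a b u = (List.range L).map fun t => y (j + t) := by
  have hstep1 : ∀ (n j : ℕ), ((List.range (n + 1)).map fun t => y (j + t)) =
      y j :: ((List.range n).map fun t => y (j + 1 + t)) := by
    intro n j
    refine List.ext_getElem (by simp) fun t h1 h2 => ?_
    cases t with
    | zero => simp
    | succ t =>
        simp only [List.getElem_map, List.getElem_range, List.getElem_cons_succ]
        congr 1
        omega
  have hstep2 : ∀ (n j : ℕ), ((List.range (n + 1)).map fun t => y (j + t)) =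
      ((List.range n).map fun t => y (j + t)) ++ [y (j + n)] := by
    intro n j
    rw [List.range_succ, List.map_append]
    simp
  rcases es with _ | ⟨e0, rest⟩
  · exact absurd rfl hne
  rcases rest with _ | ⟨q, rest2⟩
  · -- single run
    simp only [List.getD_cons_zero] at h0
    by_cases hc : e0 ≤ a
    · exact ⟨0, 0, by rw [Df_single hexps, cut_le hc]; simp⟩
    · have hyk : y k = b := by rcases hy k with h | h <;> omega
      refine ⟨k, 1, ?_⟩
      rw [Df_single hexps, cut_gt (by omega)]
      have h1 : ((List.range 1).map fun t => y (k + t)) = [y k] := by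
        rw [show List.range 1 = [0] from rfl]
        simp
      rw [h1, hyk]
  · -- at least two runs
    simp only [List.getD_cons_zero] at h0
    have hlast' : (q :: rest2).getD rest2.length 0 ≤ y (k + (rest2.length + 1)) := by
      have hl1 : (e0 :: q :: rest2).length - 1 = rest2.length + 1 := by simp
      rw [hl1, List.getD_cons_succ] at hlast
      exact hlast
    have hmid : (q :: rest2).dropLast = (List.range rest2.length).map fun t => y (k + 1 + t) := by
      refine eq_map_range (by simp) fun t htt => ?_
      rw [getD_dropLast (by simp; omega)]
      have := hinner (t + 1) (by omega) (by simp; omega)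
      rw [List.getD_cons_succ] at this
      rw [this]
      congr 1
      omega
    by_cases hcl : e0 ≤ a
    · by_cases hcr : (q :: rest2).getD rest2.length 0 ≤ a
      · refine ⟨k + 1, rest2.length, ?_⟩
        rw [Df_multi hexps, cut_le hcl, cut_le hcr, hmid]
        simp
      · have hykr : y (k + (rest2.length + 1)) = b := by
          rcases hy (k + (rest2.length + 1)) with h | h <;> omega
        refine ⟨k + 1, rest2.length + 1, ?_⟩
        have hfix : y (k + 1 + rest2.length) = b := by
          have he2 : k + 1 + rest2.length = k + (rest2.length + 1) := by omega
          rw [he2, hykr]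
        rw [hstep2, Df_multi hexps, cut_le hcl, cut_gt (by omega), hmid, hfix]
        simp
    · have hyk : y k = b := by rcases hy k with h | h <;> omega
      by_cases hcr : (q :: rest2).getD rest2.length 0 ≤ a
      · refine ⟨k, rest2.length + 1, ?_⟩
        rw [hstep1, Df_multi hexps, cut_gt (by omega), cut_le hcr, hmid, hyk]
        simp
      · have hykr : y (k + (rest2.length + 1)) = b := by
          rcases hy (k + (rest2.length + 1)) with h | h <;> omega
        refine ⟨k, rest2.length + 2, ?_⟩
        have hfix : y (k + 1 + rest2.length) = b := by
          have he2 : k + 1 + rest2.length = k + (rest2.length + 1) := by omega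
          rw [he2, hykr]
        rw [hstep1, hstep2, Df_multi hexps, cut_gt (by omega),
          cut_gt (show a < (q :: rest2).getD rest2.length 0 by omega), hmid, hfix, hyk]
        simp

end Struct


def Wefit (a b : ℕ) : ℕ → List ℕ := fun m => (fun u => alt a b b u)^[m] [b]

def Wword (a b : ℕ) : ℕ → ℕ := fun n => (Wefit a b (n + 1)).getD n 0

section Wlemmas
variable {a b : ℕ}

lemma Wefit_succ (m : ℕ) : Wefit a b (m + 1) = alt a b b (Wefit a b m) :=
  Function.iterate_succ_apply' _ _ _

lemma Wefit_zero : Wefit a b 0 = [b] := rfl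

lemma alt_replicate_getD {c e s : ℕ} {t : List ℕ} (hs : s < e) :
    (List.replicate e c ++ t).getD s 0 = c := by
  rw [List.getD_append _ _ _ _ (by simpa using hs), List.getD_eq_getElem _ _ (by simpa using hs)]
  simp

lemma Wefit_cons (hb : 1 ≤ b) : ∀ m, ∃ t, Wefit a b m = b :: t := by
  intro m
  induction m with
  | zero => exact ⟨[], rfl⟩
  | succ m ih =>
      obtain ⟨t, ht⟩ := ih
      rw [Wefit_succ, ht]
      exact alt_head hb

lemma Wefit_mem : ∀ m, ∀ d ∈ Wefit a b m, d = a ∨ d = b := by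
  intro m
  induction m with
  | zero => intro d hd; rw [Wefit_zero] at hd; simp at hd; exact Or.inr hd
  | succ m ih =>
      rw [Wefit_succ]
      exact alt_mem _ _ (Or.inr rfl)

lemma Wefit_pos (ha : 1 ≤ a) (hab : a < b) {m : ℕ} : ∀ e ∈ Wefit a b m, 1 ≤ e := by
  intro e he
  rcases Wefit_mem m e he with rfl | rfl <;> omega

lemma Wefit_len (ha : 1 ≤ a) (hab : a < b) : ∀ m, m + 1 ≤ (Wefit a b m).length := by
  intro m
  induction m with
  | zero => rw [Wefit_zero]; simp
  | succ m ih =>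
      rw [Wefit_succ, length_alt]
      obtain ⟨t, ht⟩ := Wefit_cons (a := a) (b := b) (by omega) m
      have htpos : t.length ≤ t.sum :=
        length_le_sum fun e he => Wefit_pos ha hab e (by rw [ht]; simp [he])
      have hlen : (Wefit a b m).length = t.length + 1 := by rw [ht]; simp
      have : (Wefit a b m).sum = b + t.sum := by rw [ht]; simp
      omega

lemma alt_prefix {c : ℕ} {u v : List ℕ} (h : u <+: v) :
    alt a b c u <+: alt a b c v := by
  obtain ⟨w, rfl⟩ := h
  rw [alt_append]
  exact ⟨_, rfl⟩

lemma Wefit_prefix_succ (ha : 1 ≤ a) (hab : a < b) :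
    ∀ m, Wefit a b m <+: Wefit a b (m + 1) := by
  intro m
  induction m with
  | zero =>
      rw [Wefit_succ, Wefit_zero]
      have h1 : alt a b b [b] = List.replicate b b := by
        rw [alt_cons, alt_nil, List.append_nil]
      rw [h1]
      refine ⟨List.replicate (b - 1) b, ?_⟩
      rw [List.singleton_append, ← List.replicate_succ]
      congr 1
      omega
  | succ m ih =>
      have h := alt_prefix (a := a) (b := b) (c := b) ih
      rwa [← Wefit_succ m, ← Wefit_succ (m + 1)] at h

lemma Wefit_prefix (ha : 1 ≤ a) (hab : a < b) {m m' : ℕ} (h : m ≤ m') :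
    Wefit a b m <+: Wefit a b m' := by
  induction m' with
  | zero =>
      have : m = 0 := by omega
      subst this
      exact List.prefix_refl _
  | succ m' ih =>
      rcases Nat.lt_or_ge m (m' + 1) with h' | h'
      · exact (ih (by omega)).trans (Wefit_prefix_succ ha hab m')
      · have : m = m' + 1 := by omega
        subst this
        exact List.prefix_refl _

lemma Wefit_getD_eq (ha : 1 ≤ a) (hab : a < b) {m n : ℕ}
    (h : n < (Wefit a b m).length) :
    (Wefit a b m).getD n 0 = Wword a b n := by
  have hn1 : n < (Wefit a b (n + 1)).length := by
    have := Wefit_len ha hab (n + 1)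
    omega
  show _ = (Wefit a b (n + 1)).getD n 0
  rw [List.getD_eq_getElem _ _ h, List.getD_eq_getElem _ _ hn1]
  rcases le_total m (n + 1) with hmn | hmn
  · exact (Wefit_prefix ha hab hmn).getElem h
  · exact ((Wefit_prefix ha hab hmn).getElem hn1).symm

lemma Wword_mem (ha : 1 ≤ a) (hab : a < b) (n : ℕ) :
    Wword a b n = a ∨ Wword a b n = b := by
  have hn1 : n < (Wefit a b (n + 1)).length := by
    have := Wefit_len ha hab (n + 1)
    omega
  show (Wefit a b (n + 1)).getD n 0 = a ∨ (Wefit a b (n + 1)).getD n 0 = b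
  rw [List.getD_eq_getElem _ _ hn1]
  exact Wefit_mem _ _ (List.getElem_mem hn1)

lemma Wword_pos (ha : 1 ≤ a) (hab : a < b) (n : ℕ) : 1 ≤ Wword a b n := by
  rcases Wword_mem ha hab n with h | h <;> omega

lemma Wword_zero (hb : 1 ≤ b) : Wword a b 0 = b := by
  obtain ⟨t, ht⟩ := Wefit_cons (a := a) hb 1
  show (Wefit a b 1).getD 0 0 = b
  rw [ht]
  rfl

lemma sum_take_eq_Ts {l : List ℕ} : ∀ k, k ≤ l.length →
    (∀ t, t < k → l.getD t 0 = Wword a b t) →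
    (l.take k).sum = Ts (Wword a b) k := by
  intro k
  induction k with
  | zero => intro _ _; rfl
  | succ k ih =>
      intro hk h
      rw [List.take_succ, List.sum_append, ih (by omega) (fun t ht => h t (by omega))]
      rw [List.getElem?_eq_getElem (by omega)]
      have := h k (by omega)
      rw [List.getD_eq_getElem _ _ (by omega)] at this
      show Ts (Wword a b) k + _ = Ts (Wword a b) k + Wword a b k
      simp [this]

lemma alt_getD : ∀ (u : List ℕ) (c k : ℕ), (∀ e ∈ u, 1 ≤ e) →
    k < u.length → ∀ (s : ℕ), s < u.getD k 0 →
    (alt a b c u).getD ((u.take k).sum + s) 0 = (flip a b)^[k] c := by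
  intro u
  induction u with
  | nil => intro c k _ hk; simp at hk
  | cons e t ih =>
      intro c k hpos hk s hs
      cases k with
      | zero =>
          simp only [List.take_zero, List.sum_nil, Nat.zero_add]
          rw [alt_cons]
          exact alt_replicate_getD (by simpa using hs)
      | succ k =>
          rw [alt_cons, List.take_succ_cons, List.sum_cons]
          rw [List.getD_append_right _ _ _ _ (by simp; omega)]
          have heq : e + (List.take k t).sum + s - (List.replicate e c).length =
              (List.take k t).sum + s := by simp; omega
          rw [heq]
          rw [Function.iterate_succ_apply]
          exact ih (flip a b c) k (fun e' he' => hpos e' (by simp [he']))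
            (by simpa using hk) s (by simpa using hs)

lemma W_block (ha : 1 ≤ a) (hab : a < b) (k s : ℕ) (hs : s < Wword a b k) :
    Wword a b (Ts (Wword a b) k + s) = (flip a b)^[k] b := by
  set m := k + Ts (Wword a b) k + s with hm
  have h1 : k < (Wefit a b m).length := by
    have := Wefit_len ha hab m
    omega
  have h2 : (Wefit a b m).getD k 0 = Wword a b k := Wefit_getD_eq ha hab h1
  have h3 : Ts (Wword a b) k + s < (Wefit a b (m + 1)).length := by
    have := Wefit_len ha hab (m + 1)
    omega
  have h4 : ((Wefit a b m).take k).sum = Ts (Wword a b) k :=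
    sum_take_eq_Ts k (by omega) fun t ht =>
      Wefit_getD_eq ha hab (by omega)
  have h5 := alt_getD (a := a) (b := b) (Wefit a b m) b k (Wefit_pos ha hab) h1 s
    (by rw [h2]; exact hs)
  rw [h4, ← Wefit_succ] at h5
  rw [← Wefit_getD_eq ha hab h3]
  exact h5

lemma derivesTo_W (ha : 1 ≤ a) (hab : a < b) :
    DerivesTo a b (Wword a b) (Wword a b) := by
  refine ⟨Wword_mem ha hab, Ts (Wword a b), rfl, fun k => rfl, fun k i h1 h2 => ?_⟩
  have hT : Ts (Wword a b) (k + 1) = Ts (Wword a b) k + Wword a b k := rfl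
  have hs : i - Ts (Wword a b) k < Wword a b k := by omega
  have hW := W_block ha hab k (i - Ts (Wword a b) k) hs
  rw [show Ts (Wword a b) k + (i - Ts (Wword a b) k) = i from by omega] at hW
  rw [hW, Wword_zero (by omega)]

lemma smooth_W (ha : 1 ≤ a) (hab : a < b) : Smooth a b (Wword a b) :=
  ⟨Wword_mem ha hab, fun _ => Wword a b, rfl, fun _ => derivesTo_W ha hab⟩

end Wlemmas




section Main
variable {a b : ℕ}

theorem factor_fsmooth (ha : 1 ≤ a) (hab : a < b) :
    ∀ n (u : List ℕ) (x : ℕ → ℕ), u.length = n → Smooth a b x → FactorOf u x →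
      FSmooth a b u := by
  intro n
  induction n using Nat.strong_induction_on with
  | _ n ih =>
    intro u x hlen hs hf
    rcases eq_or_ne u [] with rfl | hu
    · exact fsmooth_nil
    obtain ⟨i, hfac⟩ := hf
    obtain ⟨hxmem, X, hX0, hder⟩ := hs
    have hder0 : DerivesTo a b (X 0) (X 1) := hder 0
    obtain ⟨hymem, S, hS0, hSsucc, hblock⟩ := hder0
    have hy1 : ∀ k, 1 ≤ X 1 k := fun k => by rcases hymem k with h | h <;> omega
    have hSeq : ∀ k, S k = Ts (X 1) k := S_eq_Ts hS0 hSsucc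
    have hx : ∀ k j, Ts (X 1) k ≤ j → j < Ts (X 1) (k + 1) →
        x j = (flip a b)^[k] (x 0) := by
      intro k j h1 h2
      have := hblock k j (by rw [hSeq]; exact h1) (by rw [hSeq]; exact h2)
      rwa [hX0] at this
    have hn1 : 1 ≤ u.length := List.length_pos_iff.2 hu
    obtain ⟨k, es, hne, hsum, hpos, hmap, h0, hinner, hlast⟩ :=
      decompA (c0 := x 0) hy1 hx u.length hn1 i
    have hu_alt : u = alt a b ((flip a b)^[k] (x 0)) es := by rw [hfac]; exact hmap
    have hc0 : x 0 = a ∨ x 0 = b := hxmem 0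
    have hexps : exps u = es := by
      rw [hu_alt]
      exact exps_alt (by omega) es _ (flip_iter_mem hc0 k) hpos
    have humem : ∀ c ∈ u, c = a ∨ c = b := by
      intro c hc
      rw [hu_alt] at hc
      exact alt_mem es _ (flip_iter_mem hc0 k) c hc
    have hCf1 : Cf1 a b u := Cf1_of_struct hab hymem humem hexps h0 hinner hlast
    obtain ⟨j, L, hDf⟩ := Df_factor hab hymem hexps hne h0 hinner hlast
    have hsy : Smooth a b (X 1) := ⟨hymem, fun m => X (m + 1), rfl, fun m => hder (m + 1)⟩
    have hLlen : (Df a b u).length = L := by rw [hDf]; simp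
    have hDffac : FactorOf (Df a b u) (X 1) := ⟨j, by rw [hLlen]; exact hDf⟩
    have hlt : (Df a b u).length < n := by rw [← hlen]; exact length_Df_lt ha hu
    have hDfs : FSmooth a b (Df a b u) := ih _ hlt _ (X 1) rfl hsy hDffac
    exact fsmooth_iff.2 ⟨hCf1, hDfs⟩

theorem fsmooth_factor (ha : 1 ≤ a) (hab : a < b) :
    ∀ n (u : List ℕ), u.length = n → FSmooth a b u → ∀ N, ∃ x, Smooth a b x ∧
      ∃ i, N ≤ i ∧ u = (List.range u.length).map fun j => x (i + j) := by
  intro n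
  induction n using Nat.strong_induction_on with
  | _ n ih =>
    intro u hlen hF N
    rcases hunil : u with _ | ⟨c, t⟩
    · exact ⟨Wword a b, smooth_W ha hab, N, le_refl N, by simp⟩
    subst hunil
    have hCf1 : Cf1 a b (c :: t) := hF 0
    have hmem := hCf1.1
    have hc : c = a ∨ c = b := hmem c (by simp)
    have hu_alt : c :: t = alt a b c (exps (c :: t)) := eq_alt (by omega) t c hmem
    have hvF : FSmooth a b (Df a b (c :: t)) := (fsmooth_iff.1 hF).2
    have hlt : (Df a b (c :: t)).length < n := by
      rw [← hlen]; exact length_Df_lt ha (by simp)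
    obtain ⟨y, hys, j, hjN, hvfac⟩ := ih _ hlt _ rfl hvF (N + 1)
    have hymem : ∀ k, y k = a ∨ y k = b := hys.1
    have hy1 : ∀ k, 1 ≤ y k := fun k => by rcases hymem k with h | h <;> omega
    have hyge : ∀ k, a ≤ y k := fun k => by rcases hymem k with h | h <;> omega
    have hvget : ∀ s, s < (Df a b (c :: t)).length →
        (Df a b (c :: t)).getD s 0 = y (j + s) := by
      intro s hsL
      conv_lhs => rw [hvfac]
      exact getD_map_range hsL
    obtain ⟨e0, rest, hes⟩ : ∃ e0 rest, exps (c :: t) = e0 :: rest := by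
      rcases h : exps (c :: t) with _ | ⟨e0, rest⟩
      · exact absurd h (exps_ne_nil (by simp))
      · exact ⟨_, _, rfl⟩
    have hpos : ∀ e ∈ e0 :: rest, 1 ≤ e := by
      rw [← hes]; exact fun e he => exps_pos e he
    have hble : ∀ p ∈ e0 :: rest, p ≤ b := by rw [← hes]; exact hCf1.2.1
    have he0b : e0 ≤ b := hble e0 (by simp)
    have hulen : (c :: t).length = (e0 :: rest).sum := by
      rw [← hes, sum_exps]
    rcases hrest : rest with _ | ⟨q, rest2⟩
    · -- single run
      subst hrest
      have hDs : Df a b (c :: t) = cut a b e0 := Df_single hes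
      have h0P : e0 ≤ y j := by
        by_cases hc0 : e0 ≤ a
        · exact le_trans hc0 (hyge j)
        · have hvb : Df a b (c :: t) = [b] := by rw [hDs, cut_gt (by omega)]
          have := hvget 0 (by rw [hvb]; simp)
          rw [hvb] at this
          simp at this
          omega
      have hplace := placeA (a := a) (b := b) (x := expand a b y ((flip a b)^[j] c))
          (c0 := (flip a b)^[j] c) hy1
        (fun k i h1 h2 => expand_block hy1 h1 h2) hpos h0P
        (fun s hs => absurd hs (by simp)) (by simp)
      rw [flip_iter_invol (show a ≠ b by omega) hc j] at hplace
      refine ⟨expand a b y ((flip a b)^[j] c),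
        smooth_expand ha hab (flip_iter_mem hc j) hys,
        Ts y j + (y j - e0), ?_, ?_⟩
      · have := Ts_ge hy1 j
        omega
      · rw [hulen]
        conv_lhs => rw [hu_alt, hes]
        exact hplace.symm
    · -- multiple runs
      subst hrest
      have hDm : Df a b (c :: t) = cut a b e0 ++ (q :: rest2).dropLast ++
          cut a b ((q :: rest2).getD rest2.length 0) := Df_multi hes
      have hel_le_b : (q :: rest2).getD rest2.length 0 ≤ b := by
        refine hble _ (List.mem_cons_of_mem _ ?_)
        rw [List.getD_eq_getElem _ _ (by simp)]
        exact List.getElem_mem _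
      have hmidlen : ((q :: rest2).dropLast).length = rest2.length := by simp
      by_cases he0 : e0 ≤ a
      · -- first cut empty
        have hj1 : 1 ≤ j := by omega
        have hvmid : Df a b (c :: t) = (q :: rest2).dropLast ++
            cut a b ((q :: rest2).getD rest2.length 0) := by
          rw [hDm, cut_le he0]; simp
        have hinnerP : ∀ s, s + 1 < (q :: rest2).length →
            (q :: rest2).getD s 0 = y ((j - 1) + 1 + s) := by
          intro s hsl
          simp only [List.length_cons] at hsl
          have h1 : (q :: rest2).getD s 0 = ((q :: rest2).dropLast).getD s 0 :=
            (getD_dropLast (by simp; omega)).symm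
          have h2 : ((q :: rest2).dropLast).getD s 0 = (Df a b (c :: t)).getD s 0 := by
            rw [hvmid, List.getD_append _ _ _ _ (by omega)]
          rw [h1, h2, hvget s (by rw [hvmid]; simp only [List.length_append, hmidlen]; omega)]
          congr 1
          omega
        have hlastP : (q :: rest2).getD ((q :: rest2).length - 1) 0 ≤
            y ((j - 1) + 1 + ((q :: rest2).length - 1)) := by
          simp only [List.length_cons, Nat.add_sub_cancel]
          by_cases hel : (q :: rest2).getD rest2.length 0 ≤ a
          · exact le_trans hel (by
              have := hyge ((j - 1) + 1 + rest2.length)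
              omega)
          · have hv2 : Df a b (c :: t) = (q :: rest2).dropLast ++ [b] := by
              rw [hvmid, cut_gt (by omega)]
            have := hvget rest2.length (by rw [hv2]; simp only [List.length_append, hmidlen]; simp)
            rw [hv2, List.getD_append_right _ _ _ _ (by omega)] at this
            rw [hmidlen] at this
            simp at this
            have hje : (j - 1) + 1 + rest2.length = j + rest2.length := by omega
            rw [hje, ← this]
            exact hel_le_b
        have h0P : e0 ≤ y (j - 1) := le_trans he0 (hyge (j - 1))
        have hplace := placeA (a := a) (b := b) (x := expand a b y ((flip a b)^[j - 1] c))
          (c0 := (flip a b)^[j - 1] c) hy1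
          (fun k i h1 h2 => expand_block hy1 h1 h2) hpos h0P
          (fun s hs => hinnerP s (by simpa using hs)) (by
            have := hlastP
            simpa using this)
        rw [flip_iter_invol (show a ≠ b by omega) hc (j - 1)] at hplace
        refine ⟨expand a b y ((flip a b)^[j - 1] c),
          smooth_expand ha hab (flip_iter_mem hc (j - 1)) hys,
          Ts y (j - 1) + (y (j - 1) - e0), ?_, ?_⟩
        · have := Ts_ge hy1 (j - 1)
          omega
        · rw [hulen]
          conv_lhs => rw [hu_alt, hes]
          exact hplace.symm
      · -- first cut = [b]
        have hvfull : Df a b (c :: t) = b :: ((q :: rest2).dropLast ++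
            cut a b ((q :: rest2).getD rest2.length 0)) := by
          rw [hDm, cut_gt (by omega)]
          simp
        have hyj : y j = b := by
          have := hvget 0 (by rw [hvfull]; simp)
          rw [hvfull] at this
          simp at this
          omega
        have h0P : e0 ≤ y j := by rw [hyj]; exact he0b
        have hinnerP : ∀ s, s + 1 < (q :: rest2).length →
            (q :: rest2).getD s 0 = y (j + 1 + s) := by
          intro s hsl
          simp only [List.length_cons] at hsl
          have h1 : (q :: rest2).getD s 0 = ((q :: rest2).dropLast).getD s 0 :=
            (getD_dropLast (by simp; omega)).symm
          have h2 : (Df a b (c :: t)).getD (s + 1) 0 =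
              ((q :: rest2).dropLast).getD s 0 := by
            rw [hvfull, List.getD_cons_succ, List.getD_append _ _ _ _ (by omega)]
          rw [h1, ← h2, hvget (s + 1) (by
            rw [hvfull]; simp only [List.length_cons, List.length_append, hmidlen]; omega)]
          congr 1
          omega
        have hlastP : (q :: rest2).getD ((q :: rest2).length - 1) 0 ≤
            y (j + 1 + ((q :: rest2).length - 1)) := by
          simp only [List.length_cons, Nat.add_sub_cancel]
          by_cases hel : (q :: rest2).getD rest2.length 0 ≤ a
          · exact le_trans hel (by
              have := hyge (j + 1 + rest2.length)
              omega)
          · have hv2 : Df a b (c :: t) = b :: ((q :: rest2).dropLast ++ [b]) := by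
              rw [hvfull, cut_gt (by omega)]
            have := hvget (rest2.length + 1) (by
              rw [hv2]; simp only [List.length_cons, List.length_append, hmidlen]; simp)
            rw [hv2, List.getD_cons_succ, List.getD_append_right _ _ _ _ (by omega)] at this
            rw [hmidlen] at this
            simp at this
            have hje : j + 1 + rest2.length = j + (rest2.length + 1) := by omega
            rw [hje, ← this]
            exact hel_le_b
        have hplace := placeA (a := a) (b := b) (x := expand a b y ((flip a b)^[j] c))
          (c0 := (flip a b)^[j] c) hy1
          (fun k i h1 h2 => expand_block hy1 h1 h2) hpos h0P
          (fun s hs => hinnerP s (by simpa using hs)) (by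
            have := hlastP
            simpa using this)
        rw [flip_iter_invol (show a ≠ b by omega) hc j] at hplace
        refine ⟨expand a b y ((flip a b)^[j] c),
          smooth_expand ha hab (flip_iter_mem hc j) hys,
          Ts y j + (y j - e0), ?_, ?_⟩
        · have := Ts_ge hy1 j
          omega
        · rw [hulen]
          conv_lhs => rw [hu_alt, hes]
          exact hplace.symm

theorem main_eq (ha : 1 ≤ a) (hab : a < b) :
    {u : List ℕ | ∃ x, Smooth a b x ∧ FactorOf u x} = {u | FSmooth a b u} := by
  ext u
  simp only [Set.mem_setOf_eq]
  constructor
  · rintro ⟨x, hs, hf⟩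
    exact factor_fsmooth ha hab u.length u x rfl hs hf
  · intro h
    obtain ⟨x, hs, i, _, hfac⟩ := fsmooth_factor ha hab u.length u rfl h 0
    exact ⟨x, hs, i, hfac⟩

end Main

theorem stmt13 (a b : ℕ) (ha : 1 ≤ a) (hab : a < b) :
    {u : List ℕ | ∃ x, Smooth a b x ∧ FactorOf u x} = {u | FSmooth a b u} ∧
    ∀ n, Set.ncard {u : List ℕ | (∃ x, Smooth a b x ∧ FactorOf u x) ∧ u.length = n}
        = Set.ncard {u : List ℕ | FSmooth a b u ∧ u.length = n} := by
  have h1 := main_eq ha hab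
  refine ⟨h1, fun n => ?_⟩
  have h2 : {u : List ℕ | (∃ x, Smooth a b x ∧ FactorOf u x) ∧ u.length = n} =
      {u : List ℕ | FSmooth a b u ∧ u.length = n} := by
    ext u
    have hu := Set.ext_iff.1 h1 u
    simp only [Set.mem_setOf_eq] at hu ⊢
    rw [hu]
  rw [h2]

end SmoothWords
end

section
/- Let T be the tree of strong bispecial f-smooth words of root ε over {a,b}, with i-th generation T_i (so |T_i| = 2^i), and let f(i) = Σ_{u ∈ T_i} |u| be the total length of generation i. Then f satisfies the recurrence f(i+1) = (a+b)·f(i) + 4a·2^i with f(0) = 0, and consequently f(i) = c·(a+b)^i − c·2^i where c = 4a/(a+b−2). -/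
namespace SmoothWords

lemma pfAux_length (a b : ℕ) : ∀ (l : List ℕ) (c : ℕ), (pfAux a b c l).length = l.sum + a
  | [], c => by simp [pfAux]
  | p :: t, c => by
      simp [pfAux, pfAux_length a b t]
      ring

lemma pfAux_mem (a b : ℕ) : ∀ (l : List ℕ) (c : ℕ), (c = a ∨ c = b) →
    ∀ x ∈ pfAux a b c l, x = a ∨ x = b
  | [], c, hc, x, hx => by
      simp [pfAux] at hx
      omega
  | p :: t, c, hc, x, hx => by
      simp [pfAux] at hx
      rcases hx with hx | hx
      · omega
      · refine pfAux_mem a b t (flip a b c) ?_ x hx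
        unfold flip
        split
        · right; rfl
        · left; rfl

lemma flip_a (a b : ℕ) : flip a b a = b := by simp [flip]

lemma flip_b (a b : ℕ) (h : b ≠ a) : flip a b b = a := by simp [flip, h]

lemma Pf_a_eq (a b : ℕ) (u : List ℕ) :
    Pf a b a u = List.replicate a a ++ pfAux a b b u := by simp [Pf]

lemma Pf_b_eq (a b : ℕ) (h : b ≠ a) (u : List ℕ) :
    Pf a b b u = (Pf a b a u).map (flip a b) := by simp [Pf, h]

lemma node_true (a b : ℕ) (h : b ≠ a) (s : List Bool) :
    node a b (true :: s) = (node a b (false :: s)).map (flip a b) := by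
  show Pf a b b _ = (Pf a b a _).map (flip a b)
  exact Pf_b_eq a b h _

lemma node_mem (a b : ℕ) (c : Bool) (s : List Bool) :
    ∀ x ∈ node a b (c :: s), x = a ∨ x = b := by
  intro x hx
  have key : ∀ w : List ℕ, x ∈ List.replicate a a ++ pfAux a b b w → x = a ∨ x = b := by
    intro w hw
    simp at hw
    rcases hw with hw | hw
    · omega
    · exact pfAux_mem a b w b (Or.inr rfl) x hw
  cases c with
  | false =>
      rw [show node a b (false :: s) = Pf a b a (node a b s) from rfl, Pf_a_eq] at hx
      exact key _ hx
  | true =>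
      by_cases hba : b = a
      · rw [show node a b (true :: s) = Pf a b b (node a b s) from rfl, Pf, if_pos hba] at hx
        exact key _ hx
      rw [node_true a b hba] at hx
      simp at hx
      obtain ⟨y, hy, hxy⟩ := hx
      subst hxy
      unfold flip
      split
      · right; rfl
      · left; rfl

lemma node_cons_length (a b : ℕ) (c : Bool) (s : List Bool) :
    (node a b (c :: s)).length = (node a b s).sum + 2 * a := by
  have base : (List.replicate a a ++ pfAux a b b (node a b s)).length
      = (node a b s).sum + 2 * a := by
    simp [pfAux_length]
    ring
  cases c with
  | false =>
      rw [show node a b (false :: s) = Pf a b a (node a b s) from rfl, Pf_a_eq]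
      exact base
  | true =>
      show (Pf a b b _).length = _
      by_cases h : b = a
      · rw [Pf, if_pos h]; exact base
      · rw [Pf_b_eq a b h, List.length_map, Pf_a_eq]; exact base

lemma sum_add_sum_map (a b : ℕ) (h : b ≠ a) :
    ∀ w : List ℕ, (∀ x ∈ w, x = a ∨ x = b) →
      (w.map (flip a b)).sum + w.sum = (a + b) * w.length
  | [], _ => by simp
  | x :: t, hw => by
      have hx : x = a ∨ x = b := hw x List.mem_cons_self
      have ht := sum_add_sum_map a b h t (fun y hy => hw y (List.mem_cons_of_mem x hy))
      have hfx : flip a b x + x = a + b := by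
        rcases hx with h1 | h1
        · rw [h1, flip_a]; ring
        · rw [h1, flip_b a b h]
      simp only [List.map_cons, List.sum_cons, List.length_cons]
      rw [Nat.mul_add, Nat.mul_one, ← ht, ← hfx]
      ring

lemma pair_sum (a b : ℕ) (h : b ≠ a) (s : List Bool) :
    (node a b (true :: s)).sum + (node a b (false :: s)).sum
      = (a + b) * (node a b (false :: s)).length := by
  rw [node_true a b h]
  exact sum_add_sum_map a b h _ (node_mem a b false s)

lemma pair_len (a b : ℕ) (h : b ≠ a) (s : List Bool) :
    (node a b (true :: s)).length = (node a b (false :: s)).length := by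
  rw [node_true a b h, List.length_map]

lemma ofFn_cons {i : ℕ} (c : Bool) (t : Fin i → Bool) :
    List.ofFn (Fin.cons c t) = c :: List.ofFn t := by
  rw [List.ofFn_succ]
  simp

lemma sum_succ_split (i : ℕ) (F : List Bool → ℕ) :
    ∑ s : Fin (i + 1) → Bool, F (List.ofFn s)
      = ∑ t : Fin i → Bool, (F (false :: List.ofFn t) + F (true :: List.ofFn t)) := by
  rw [← Fintype.sum_equiv (Fin.consEquiv (fun _ : Fin (i + 1) => Bool))
    (fun p : Bool × (Fin i → Bool) => F (p.1 :: List.ofFn p.2))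
    (fun s => F (List.ofFn s)) ?_]
  · rw [Fintype.sum_prod_type_right]
    congr 1
    ext t
    rw [Fintype.sum_bool]
    ring
  · intro p
    show F (p.1 :: List.ofFn p.2) = F (List.ofFn (Fin.cons p.1 p.2))
    rw [ofFn_cons]

lemma totalLen_zero (a b : ℕ) : totalLen a b 0 = 0 := by
  simp [totalLen, node]

lemma sum_sum_eq (a b : ℕ) (h : b ≠ a) (i : ℕ) :
    2 * ∑ t : Fin i → Bool, (node a b (List.ofFn t)).sum = (a + b) * totalLen a b i := by
  cases i with
  | zero => simp [totalLen, node]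
  | succ j =>
      unfold totalLen
      rw [sum_succ_split j (fun w => (node a b w).sum),
        sum_succ_split j (fun w => (node a b w).length)]
      rw [Finset.mul_sum, Finset.mul_sum]
      apply Finset.sum_congr rfl
      intro t _
      rw [pair_len a b h]
      have hp := pair_sum a b h (List.ofFn t)
      calc 2 * ((node a b (false :: List.ofFn t)).sum + (node a b (true :: List.ofFn t)).sum)
          = 2 * ((node a b (true :: List.ofFn t)).sum
              + (node a b (false :: List.ofFn t)).sum) := by ring
        _ = 2 * ((a + b) * (node a b (false :: List.ofFn t)).length) := by rw [hp]
        _ = (a + b) * ((node a b (false :: List.ofFn t)).length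
              + (node a b (false :: List.ofFn t)).length) := by ring

lemma totalLen_succ (a b : ℕ) (h : b ≠ a) (i : ℕ) :
    totalLen a b (i + 1) = (a + b) * totalLen a b i + 4 * a * 2 ^ i := by
  unfold totalLen
  rw [sum_succ_split i (fun w => (node a b w).length)]
  have : ∀ t : Fin i → Bool,
      (node a b (false :: List.ofFn t)).length + (node a b (true :: List.ofFn t)).length
        = 2 * (node a b (List.ofFn t)).sum + 4 * a := by
    intro t
    rw [node_cons_length, node_cons_length]
    ring
  rw [Finset.sum_congr rfl (fun t _ => this t), Finset.sum_add_distrib,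
    ← Finset.mul_sum, sum_sum_eq a b h i]
  simp [Finset.card_univ, totalLen]
  ring

theorem stmt15 (a b : ℕ) (ha : 1 ≤ a) (hab : a < b) :
    totalLen a b 0 = 0 ∧
    (∀ i, totalLen a b (i + 1) = (a + b) * totalLen a b i + 4 * a * 2 ^ i) ∧
    (∀ i, (totalLen a b i : ℝ) =
      (4 * a / ((a : ℝ) + b - 2)) * ((a : ℝ) + b) ^ i
        - (4 * a / ((a : ℝ) + b - 2)) * 2 ^ i) := by
  have hba : b ≠ a := Nat.ne_of_gt hab
  have h0 := totalLen_zero a b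
  have hrec := totalLen_succ a b hba
  refine ⟨h0, hrec, ?_⟩
  have hd : (a : ℝ) + b - 2 ≠ 0 := by
    have : (3 : ℕ) ≤ a + b := by omega
    have : (3 : ℝ) ≤ (a : ℝ) + b := by exact_mod_cast this
    linarith
  intro i
  induction i with
  | zero => simp [h0]
  | succ j ih =>
      have : (totalLen a b (j + 1) : ℝ)
          = ((a : ℝ) + b) * totalLen a b j + 4 * a * 2 ^ j := by
        rw [hrec j]; push_cast; ring
      rw [this, ih]
      field_simp
      ring

end SmoothWords
end

section
/- Let {a,b} be a binary alphabet and suppose there are constants λ > 1, C > 0, D ≥ 0 with l_i ≥ Cλ^i − D − 1 for all i ≥ 0, where l_i is the minimal length of strong bispecial f-smooth words in generation i of the tree T. Then p(n) = O(n^ζ) where ζ = log(2λ)/log(λ) and p(n) = Σ_{i≥0} Σ_{m=0}^{n−1} Σ_{m'=0}^{m−1} |T_i ∩ A^{m'}|. -/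
namespace SmoothWords

lemma genSet_card_le (a b i : ℕ) : (genSet a b i).card ≤ 2 ^ i := by
  calc (genSet a b i).card ≤ (Finset.univ : Finset (Fin i → Bool)).card :=
        Finset.card_image_le
    _ = 2 ^ i := by simp [Finset.card_univ]

lemma sfun_le (a b i n : ℕ) : sfun a b i n ≤ 2 ^ i := by
  have hdisj : ∀ m ∈ Finset.range n, ∀ m' ∈ Finset.range n, m ≠ m' →
      Disjoint ((genSet a b i).filter fun u => u.length = m)
        ((genSet a b i).filter fun u => u.length = m') := by
    intro m _ m' _ hne
    refine Finset.disjoint_left.mpr fun u hu hu' => ?_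
    simp only [Finset.mem_filter] at hu hu'
    exact hne (hu.2 ▸ hu'.2 ▸ rfl)
  have h1 : sfun a b i n = ((Finset.range n).biUnion
      fun m => (genSet a b i).filter fun u => u.length = m).card :=
    (Finset.card_biUnion hdisj).symm
  rw [h1]
  refine le_trans (Finset.card_le_card ?_) (genSet_card_le a b i)
  exact Finset.biUnion_subset.mpr fun m _ => Finset.filter_subset _ _

lemma pfun_le (a b i n : ℕ) : pfun a b i n ≤ 2 ^ i * n := by
  calc pfun a b i n ≤ ∑ _m ∈ Finset.range n, 2 ^ i :=
        Finset.sum_le_sum fun m _ => sfun_le a b i m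
    _ = 2 ^ i * n := by simp [Nat.mul_comm]

lemma bfun_eq_zero (a b i m : ℕ) (h : m < li a b i) : bfun a b i m = 0 := by
  rw [bfun, Finset.card_eq_zero, Finset.filter_eq_empty_iff]
  intro u hu
  obtain ⟨s, _, rfl⟩ := Finset.mem_image.mp hu
  intro hlen
  have : li a b i ≤ m := hlen ▸ Nat.sInf_le ⟨s, rfl⟩
  omega

lemma pfun_eq_zero (a b i n : ℕ) (h : n ≤ li a b i) : pfun a b i n = 0 := by
  rw [pfun]
  refine Finset.sum_eq_zero fun m hm => ?_
  rw [sfun]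
  refine Finset.sum_eq_zero fun m' hm' => ?_
  have := Finset.mem_range.mp hm
  have := Finset.mem_range.mp hm'
  exact bfun_eq_zero a b i m' (by omega)

theorem stmt17 (a b : ℕ) (ha : 1 ≤ a) (hab : a < b) (lam C D : ℝ)
    (hlam : 1 < lam) (hC : 0 < C) (hD : 0 ≤ D)
    (hli : ∀ i : ℕ, C * lam ^ i - D - 1 ≤ (li a b i : ℝ)) :
    ∃ K > (0 : ℝ), ∃ N : ℕ, ∀ n : ℕ, N ≤ n →
      pTot a b n ≤ K * (n : ℝ) ^ (Real.log (2 * lam) / Real.log lam) := by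
  have hlam0 : (0 : ℝ) < lam := by linarith
  have hloglam : 0 < Real.log lam := Real.log_pos hlam
  set β : ℝ := Real.log 2 / Real.log lam with hβdef
  have hβ0 : 0 < β := div_pos (Real.log_pos one_lt_two) hloglam
  have hζ : Real.log (2 * lam) / Real.log lam = β + 1 := by
    rw [Real.log_mul two_ne_zero (by linarith), hβdef]
    field_simp
  set K : ℝ := 2 * ((D + 2) / C) ^ β with hKdef
  have hDC : (0 : ℝ) < (D + 2) / C := div_pos (by linarith) hC
  have hK0 : 0 < K := by positivity
  refine ⟨K, hK0, max 1 ⌈C⌉₊, fun n hn => ?_⟩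
  have hn1 : 1 ≤ n := le_trans (le_max_left _ _) hn
  have hnC : C ≤ (n : ℝ) := by
    have : ⌈C⌉₊ ≤ n := le_trans (le_max_right _ _) hn
    calc C ≤ (⌈C⌉₊ : ℝ) := Nat.le_ceil C
      _ ≤ n := by exact_mod_cast this
  have hnpos : (0 : ℝ) < n := by exact_mod_cast hn1
  set x : ℝ := ((n : ℝ) + D + 1) / C with hxdef
  have hx1 : 1 ≤ x := by
    rw [hxdef, le_div_iff₀ hC]
    linarith
  have hx0 : 0 < x := lt_of_lt_of_le one_pos hx1
  set t : ℝ := Real.logb lam x with htdef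
  have ht0 : 0 ≤ t := Real.logb_nonneg hlam hx1
  set I : ℕ := ⌈t⌉₊ with hIdef
  -- key: lam ^ I ≥ x
  have hlamI : x ≤ lam ^ I := by
    have h1 : lam ^ (t : ℝ) ≤ lam ^ ((I : ℕ) : ℝ) :=
      Real.rpow_le_rpow_of_exponent_le hlam.le (Nat.le_ceil t)
    rw [Real.rpow_logb hlam0 hlam.ne' hx0] at h1
    rwa [Real.rpow_natCast] at h1
  -- pfun vanishes for i ≥ I
  have hvanish : ∀ i : ℕ, i ∉ Finset.range I → ((pfun a b i n : ℝ)) = 0 := by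
    intro i hi
    have hIi : I ≤ i := by simpa using hi
    have h1 : lam ^ I ≤ lam ^ i := pow_le_pow_right₀ hlam.le hIi
    have h2 : (n : ℝ) ≤ C * lam ^ i - D - 1 := by
      have : C * x ≤ C * lam ^ i := by
        refine mul_le_mul_of_nonneg_left (le_trans hlamI h1) hC.le
      rw [hxdef, mul_div_cancel₀ _ hC.ne'] at this
      linarith
    have h3 : (n : ℝ) ≤ (li a b i : ℝ) := le_trans h2 (hli i)
    have h4 : n ≤ li a b i := by exact_mod_cast h3
    rw [pfun_eq_zero a b i n h4]
    norm_num
  have hsum : pTot a b n = ∑ i ∈ Finset.range I, (pfun a b i n : ℝ) :=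
    tsum_eq_sum hvanish
  -- bound the finite sum
  have hbound : pTot a b n ≤ (2 : ℝ) ^ I * n := by
    rw [hsum]
    calc ∑ i ∈ Finset.range I, (pfun a b i n : ℝ)
        ≤ ∑ i ∈ Finset.range I, (2 : ℝ) ^ i * n := by
          refine Finset.sum_le_sum fun i _ => ?_
          have := pfun_le a b i n
          calc ((pfun a b i n : ℝ)) ≤ ((2 ^ i * n : ℕ) : ℝ) := by exact_mod_cast this
            _ = (2 : ℝ) ^ i * n := by push_cast; ring
      _ = (∑ i ∈ Finset.range I, (2 : ℝ) ^ i) * n := by rw [Finset.sum_mul]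
      _ = ((2 : ℝ) ^ I - 1) * n := by rw [geom_sum_eq (by norm_num : (2:ℝ) ≠ 1)]; ring
      _ ≤ (2 : ℝ) ^ I * n := by nlinarith [pow_pos (by norm_num : (0:ℝ) < 2) I]
  -- bound 2^I
  have h2I : (2 : ℝ) ^ I ≤ 2 * x ^ β := by
    have h1 : ((I : ℕ) : ℝ) < t + 1 := Nat.ceil_lt_add_one ht0
    have h2 : (2 : ℝ) ^ ((I : ℕ) : ℝ) ≤ (2 : ℝ) ^ (t + 1) :=
      Real.rpow_le_rpow_of_exponent_le one_le_two h1.le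
    rw [Real.rpow_natCast] at h2
    have h3 : (2 : ℝ) ^ (t + 1) = 2 * (2 : ℝ) ^ t := by
      rw [Real.rpow_add (by norm_num), Real.rpow_one]; ring
    have h4 : (2 : ℝ) ^ (t : ℝ) = x ^ β := by
      rw [Real.rpow_def_of_pos (by norm_num : (0:ℝ) < 2),
        Real.rpow_def_of_pos hx0, htdef, Real.logb, hβdef]
      congr 1
      field_simp
    rw [h3, h4] at h2
    exact h2
  -- bound x^β
  have hxn : x ≤ (D + 2) / C * n := by
    rw [hxdef, div_mul_eq_mul_div, div_le_div_iff₀ hC hC]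
    have h1 : (1 : ℝ) ≤ (n : ℝ) := by exact_mod_cast hn1
    have key : (n : ℝ) + D + 1 ≤ (D + 2) * n := by nlinarith [mul_nonneg hD (sub_nonneg.mpr h1)]
    exact mul_le_mul_of_nonneg_right key hC.le
  have hxβ : x ^ β ≤ ((D + 2) / C) ^ β * (n : ℝ) ^ β := by
    calc x ^ β ≤ ((D + 2) / C * n) ^ β :=
          Real.rpow_le_rpow hx0.le hxn hβ0.le
      _ = ((D + 2) / C) ^ β * (n : ℝ) ^ β :=
          Real.mul_rpow hDC.le hnpos.le
  -- conclude
  have hnβ1 : (n : ℝ) ^ (β + 1) = (n : ℝ) ^ β * n := by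
    rw [Real.rpow_add hnpos, Real.rpow_one]
  rw [hζ, hnβ1]
  calc pTot a b n ≤ (2 : ℝ) ^ I * n := hbound
    _ ≤ 2 * x ^ β * n := by
        exact mul_le_mul_of_nonneg_right h2I hnpos.le
    _ ≤ 2 * (((D + 2) / C) ^ β * (n : ℝ) ^ β) * n := by
        have := mul_le_mul_of_nonneg_left hxβ (by norm_num : (0:ℝ) ≤ 2)
        exact mul_le_mul_of_nonneg_right this hnpos.le
    _ = K * ((n : ℝ) ^ β * n) := by rw [hKdef]; ring

end SmoothWords
end
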